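/- Let σ > 0, κ ≥ 0 and let λ₁, λ₂ ∈ ℝ satisfy (σ²/2)λ₁² − κλ₁ + λ₂ ≤ 0. Then the real Riccati differential equation ψ'(t) = (σ²/2)ψ(t)² − κψ(t) + λ₂ with ψ(0) = λ₁ has a unique solution ψ defined on all of [0,∞); moreover ψ is nonincreasing and satisfies κ/σ² − √((κ/σ²)² − 2λ₂/σ²) ≤ ψ(t) ≤ λ₁ for every t ≥ 0 (note that (κ/σ²)² − 2λ₂/σ² ≥ 0 under the stated hypothesis). -/

import Mathlib

open Set

lemma riccati_unique (σ κ lam2 : ℝ) (ψ φ : ℝ → ℝ)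
    (hψ : ∀ t ∈ Set.Ici (0 : ℝ),
      HasDerivWithinAt ψ (σ ^ 2 / 2 * ψ t ^ 2 - κ * ψ t + lam2) (Set.Ici 0) t)
    (hφ : ∀ t ∈ Set.Ici (0 : ℝ),
      HasDerivWithinAt φ (σ ^ 2 / 2 * φ t ^ 2 - κ * φ t + lam2) (Set.Ici 0) t)
    (h0 : φ 0 = ψ 0) : Set.EqOn φ ψ (Set.Ici 0) := by
  intro t ht
  have ht0 : (0:ℝ) ≤ t := ht
  have hφc : ContinuousOn φ (Icc 0 t) :=
    fun u hu => ((hφ u hu.1).continuousWithinAt).mono Icc_subset_Ici_self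
  have hψc : ContinuousOn ψ (Icc 0 t) :=
    fun u hu => ((hψ u hu.1).continuousWithinAt).mono Icc_subset_Ici_self
  obtain ⟨C1, hC1⟩ := isCompact_Icc.exists_bound_of_continuousOn hφc
  obtain ⟨C2, hC2⟩ := isCompact_Icc.exists_bound_of_continuousOn hψc
  set R : ℝ := max C1 C2 with hR
  have hφR : ∀ u ∈ Icc (0:ℝ) t, φ u ∈ Icc (-R) R := by
    intro u hu
    have := hC1 u hu
    rw [Real.norm_eq_abs, abs_le] at this
    constructor
    · linarith [this.1, le_max_left C1 C2]
    · linarith [this.2, le_max_left C1 C2]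
  have hψR : ∀ u ∈ Icc (0:ℝ) t, ψ u ∈ Icc (-R) R := by
    intro u hu
    have := hC2 u hu
    rw [Real.norm_eq_abs, abs_le] at this
    constructor
    · linarith [this.1, le_max_right C1 C2]
    · linarith [this.2, le_max_right C1 C2]
  have hR0 : 0 ≤ R := by
    have := hC1 0 ⟨le_refl 0, ht0⟩
    have h2 := norm_nonneg (φ 0)
    exact le_trans h2 (le_trans this (le_max_left C1 C2))
  set K : NNReal := Real.toNNReal (σ ^ 2 * R + |κ|) with hK
  have hv : ∀ u : ℝ, LipschitzOnWith K
      (fun x : ℝ => σ ^ 2 / 2 * x ^ 2 - κ * x + lam2) (Icc (-R) R) := by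
    intro u
    rw [lipschitzOnWith_iff_dist_le_mul]
    intro x hx y hy
    rw [Real.dist_eq, Real.dist_eq]
    have hcoe : (K : ℝ) = max (σ ^ 2 * R + |κ|) 0 := Real.coe_toNNReal' _
    have hkey : σ ^ 2 / 2 * x ^ 2 - κ * x + lam2 - (σ ^ 2 / 2 * y ^ 2 - κ * y + lam2)
        = (σ ^ 2 / 2 * (x + y) - κ) * (x - y) := by ring
    rw [hkey, abs_mul]
    have hb : |σ ^ 2 / 2 * (x + y) - κ| ≤ σ ^ 2 * R + |κ| := by
      rw [abs_le]
      constructor <;> nlinarith [le_abs_self κ, neg_abs_le κ, hx.1, hx.2, hy.1, hy.2,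
        sq_nonneg σ, abs_nonneg (x - y)]
    have hb2 : σ ^ 2 * R + |κ| ≤ (K : ℝ) := by rw [hcoe]; exact le_max_left _ _
    exact mul_le_mul_of_nonneg_right (le_trans hb hb2) (abs_nonneg _)
  have key := ODE_solution_unique_of_mem_Icc_right
    (v := fun _ x => σ ^ 2 / 2 * x ^ 2 - κ * x + lam2)
    (s := fun _ => Icc (-R) R) (K := K) (fun u _ => hv u) hφc
    (fun u hu => (hφ u hu.1).mono (Set.Ici_subset_Ici.mpr hu.1))
    (fun u hu => hφR u ⟨hu.1, le_of_lt hu.2⟩) hψc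
    (fun u hu => (hψ u hu.1).mono (Set.Ici_subset_Ici.mpr hu.1))
    (fun u hu => hψR u ⟨hu.1, le_of_lt hu.2⟩) h0
  exact key ⟨ht0, le_refl t⟩

lemma riccati_exists (σ κ lam2 rm rp lam1 : ℝ) (hσ2 : 0 < σ ^ 2)
    (hsum : σ ^ 2 / 2 * (rm + rp) = κ) (hprod : σ ^ 2 / 2 * (rm * rp) = lam2)
    (hrm1 : rm < lam1) (hr1p : lam1 < rp) :
    ∃ ψ : ℝ → ℝ, ψ 0 = lam1 ∧
      (∀ t : ℝ, HasDerivAt ψ (σ ^ 2 / 2 * ψ t ^ 2 - κ * ψ t + lam2) t) ∧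
      AntitoneOn ψ (Set.Ici 0) ∧ (∀ t : ℝ, rm ≤ ψ t) := by
  have hfact : ∀ x : ℝ, σ ^ 2 / 2 * x ^ 2 - κ * x + lam2
      = σ ^ 2 / 2 * (x - rm) * (x - rp) := by
    intro x; linear_combination x * hsum - hprod
  have hrmrp : rm < rp := lt_trans hrm1 hr1p
  set u0 : ℝ := (lam1 - rm) / (rp - lam1) with hu0def
  have hu0 : 0 < u0 := div_pos (by linarith) (by linarith)
  set γ : ℝ := σ ^ 2 / 2 * (rp - rm) with hγdef
  have hγ0 : 0 < γ := mul_pos (by positivity) (by linarith)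
  set w : ℝ → ℝ := fun t => u0 * Real.exp (-γ * t) with hwdef
  have hw0 : ∀ t, 0 < w t := fun t => mul_pos hu0 (Real.exp_pos _)
  have hP0 : ∀ t, 0 < 1 + w t := fun t => by linarith [hw0 t]
  have hPne : ∀ t, 1 + w t ≠ 0 := fun t => ne_of_gt (hP0 t)
  set ψ : ℝ → ℝ := fun t => (rm + rp * w t) / (1 + w t) with hψdef
  have hd : ∀ t : ℝ, HasDerivAt ψ (σ ^ 2 / 2 * ψ t ^ 2 - κ * ψ t + lam2) t := by
    intro t
    have hwderiv : HasDerivAt w (-γ * w t) t := by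
      have h1 : HasDerivAt (fun t : ℝ => -γ * t) (-γ) t := by
        simpa using (hasDerivAt_id t).const_mul (-γ)
      have h2 := (Real.hasDerivAt_exp (-γ * t)).comp t h1
      have h3 := h2.const_mul u0
      refine h3.congr_deriv ?_
      simp only [hwdef]; ring
    have hnum : HasDerivAt (fun t => rm + rp * w t) (rp * (-γ * w t)) t :=
      (hwderiv.const_mul rp).const_add rm
    have hden : HasDerivAt (fun t => 1 + w t) (-γ * w t) t :=
      hwderiv.const_add 1
    have hdiv := hnum.div hden (hPne t)
    refine hdiv.congr_deriv ?_
    rw [hψdef]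
    simp only
    rw [hfact ((rm + rp * w t) / (1 + w t))]
    have h1w := hPne t
    field_simp
    ring
  have hlow : ∀ t : ℝ, rm ≤ ψ t := by
    intro t
    have h1 : ψ t - rm = (rp - rm) * w t / (1 + w t) := by
      rw [hψdef]; simp only; field_simp [hPne t]; ring
    have hA : 0 ≤ (rp - rm) * w t / (1 + w t) :=
      div_nonneg (mul_nonneg (by linarith) (le_of_lt (hw0 t))) (le_of_lt (hP0 t))
    linarith
  have hup : ∀ t : ℝ, ψ t ≤ rp := by
    intro t
    have h2 : ψ t - rp = (rm - rp) / (1 + w t) := by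
      rw [hψdef]; simp only; field_simp [hPne t]; ring
    have hB : (rm - rp) / (1 + w t) ≤ 0 :=
      div_nonpos_of_nonpos_of_nonneg (by linarith) (le_of_lt (hP0 t))
    linarith
  refine ⟨ψ, ?_, hd, ?_, hlow⟩
  · show (rm + rp * w 0) / (1 + w 0) = lam1
    have hw00 : w 0 = u0 := by simp [hwdef]
    rw [hw00, div_eq_iff (by rw [← hw00]; exact hPne 0), hu0def]
    have hne : rp - lam1 ≠ 0 := by intro h; linarith
    field_simp
    ring
  · apply antitoneOn_of_deriv_nonpos (convex_Ici 0)
    · exact fun x _ => ((hd x).differentiableAt).continuousAt.continuousWithinAt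
    · exact fun x _ => ((hd x).differentiableAt).differentiableWithinAt
    · intro x _
      rw [(hd x).deriv, hfact (ψ x)]
      have hA := hlow x
      have hB := hup x
      nlinarith [mul_nonneg (mul_nonneg hσ2.le (sub_nonneg.mpr hA)) (sub_nonneg.mpr hB)]

/- STATEMENT 6: Global existence, uniqueness, monotonicity and bounds for the real
Riccati ODE `ψ' = (σ²/2)ψ² - κψ + λ₂`, `ψ(0) = λ₁`, assuming
`(σ²/2)λ₁² - κλ₁ + λ₂ ≤ 0`. -/
theorem stmt_6 (σ κ lam1 lam2 : ℝ) (hσ : 0 < σ) (hκ : 0 ≤ κ)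
    (hsign : σ ^ 2 / 2 * lam1 ^ 2 - κ * lam1 + lam2 ≤ 0) :
    0 ≤ (κ / σ ^ 2) ^ 2 - 2 * lam2 / σ ^ 2 ∧
    ∃ ψ : ℝ → ℝ, ψ 0 = lam1 ∧
      (∀ t ∈ Set.Ici (0 : ℝ),
        HasDerivWithinAt ψ (σ ^ 2 / 2 * ψ t ^ 2 - κ * ψ t + lam2) (Set.Ici 0) t) ∧
      AntitoneOn ψ (Set.Ici 0) ∧
      (∀ t ∈ Set.Ici (0 : ℝ),
        κ / σ ^ 2 - Real.sqrt ((κ / σ ^ 2) ^ 2 - 2 * lam2 / σ ^ 2) ≤ ψ t ∧ ψ t ≤ lam1) ∧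
      ∀ φ : ℝ → ℝ, φ 0 = lam1 →
        (∀ t ∈ Set.Ici (0 : ℝ),
          HasDerivWithinAt φ (σ ^ 2 / 2 * φ t ^ 2 - κ * φ t + lam2) (Set.Ici 0) t) →
        Set.EqOn φ ψ (Set.Ici 0) := by
  have hσ2 : (0:ℝ) < σ ^ 2 := by positivity
  have hdisc : 0 ≤ (κ / σ ^ 2) ^ 2 - 2 * lam2 / σ ^ 2 := by
    have h2 : 0 ≤ κ ^ 2 - 2 * σ ^ 2 * lam2 := by
      nlinarith [sq_nonneg (σ ^ 2 * lam1 - κ), mul_nonneg (le_of_lt hσ2) (neg_nonneg.mpr hsign)]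
    have heq : (κ / σ ^ 2) ^ 2 - 2 * lam2 / σ ^ 2 = (κ ^ 2 - 2 * σ ^ 2 * lam2) / σ ^ 4 := by
      field_simp
    rw [heq]; positivity
  refine ⟨hdisc, ?_⟩
  have hs0 : 0 ≤ Real.sqrt ((κ / σ ^ 2) ^ 2 - 2 * lam2 / σ ^ 2) := Real.sqrt_nonneg _
  have hs2 : Real.sqrt ((κ / σ ^ 2) ^ 2 - 2 * lam2 / σ ^ 2) ^ 2
      = (κ / σ ^ 2) ^ 2 - 2 * lam2 / σ ^ 2 := Real.sq_sqrt hdisc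
  obtain ⟨rm, hrmdef⟩ : ∃ rm : ℝ,
      rm = κ / σ ^ 2 - Real.sqrt ((κ / σ ^ 2) ^ 2 - 2 * lam2 / σ ^ 2) := ⟨_, rfl⟩
  obtain ⟨rp, hrpdef⟩ : ∃ rp : ℝ,
      rp = κ / σ ^ 2 + Real.sqrt ((κ / σ ^ 2) ^ 2 - 2 * lam2 / σ ^ 2) := ⟨_, rfl⟩
  have hrmrp : rm ≤ rp := by rw [hrmdef, hrpdef]; linarith
  have hsum : σ ^ 2 / 2 * (rm + rp) = κ := by
    rw [hrmdef, hrpdef]; field_simp; ring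
  have hprod : σ ^ 2 / 2 * (rm * rp) = lam2 := by
    rw [hrmdef, hrpdef]
    have hexp : (κ / σ ^ 2 - Real.sqrt ((κ / σ ^ 2) ^ 2 - 2 * lam2 / σ ^ 2)) *
        (κ / σ ^ 2 + Real.sqrt ((κ / σ ^ 2) ^ 2 - 2 * lam2 / σ ^ 2))
        = (κ / σ ^ 2) ^ 2 - Real.sqrt ((κ / σ ^ 2) ^ 2 - 2 * lam2 / σ ^ 2) ^ 2 := by ring
    rw [hexp, hs2]
    field_simp
    ring
  have hfact : ∀ x : ℝ, σ ^ 2 / 2 * x ^ 2 - κ * x + lam2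
      = σ ^ 2 / 2 * (x - rm) * (x - rp) := by
    intro x; linear_combination x * hsum - hprod
  have hfl : σ ^ 2 / 2 * (lam1 - rm) * (lam1 - rp) ≤ 0 := by
    rw [← hfact]; exact hsign
  have hr1 : rm ≤ lam1 := by
    by_contra h
    push_neg at h
    have hpos : 0 < (rm - lam1) * (rp - lam1) :=
      mul_pos (by linarith) (by linarith)
    nlinarith [mul_pos hσ2 hpos]
  have hr2 : lam1 ≤ rp := by
    by_contra h
    push_neg at h
    have hpos : 0 < (lam1 - rm) * (lam1 - rp) :=
      mul_pos (by linarith) (by linarith)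
    nlinarith [mul_pos hσ2 hpos]
  rcases eq_or_lt_of_le hsign with hEq | hLt
  · -- constant solution
    have hd : ∀ t ∈ Set.Ici (0:ℝ), HasDerivWithinAt (fun _ : ℝ => lam1)
        (σ ^ 2 / 2 * (fun _ : ℝ => lam1) t ^ 2 - κ * (fun _ : ℝ => lam1) t + lam2)
        (Set.Ici 0) t := by
      intro t ht
      have h0 : σ ^ 2 / 2 * lam1 ^ 2 - κ * lam1 + lam2 = 0 := hEq
      simpa [h0] using hasDerivWithinAt_const t (Set.Ici (0:ℝ)) lam1
    refine ⟨fun _ => lam1, rfl, hd, ?_, ?_, ?_⟩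
    · intro x _ y _ _; exact le_refl lam1
    · intro t _; exact ⟨by rw [← hrmdef]; exact hr1, le_refl lam1⟩
    · intro φ hφ0 hφd
      exact riccati_unique σ κ lam2 (fun _ => lam1) φ hd hφd (by simpa using hφ0)
  · -- non-degenerate solution
    have hrm1 : rm < lam1 := by
      rcases lt_or_eq_of_le hr1 with h | h
      · exact h
      · exfalso; rw [hfact lam1, ← h] at hLt; simp at hLt
    have hr1p : lam1 < rp := by
      rcases lt_or_eq_of_le hr2 with h | h
      · exact h
      · exfalso; rw [hfact lam1, h] at hLt; simp at hLt
    obtain ⟨ψ, hψ0, hψd, hψanti, hψlow⟩ :=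
      riccati_exists σ κ lam2 rm rp lam1 hσ2 hsum hprod hrm1 hr1p
    refine ⟨ψ, hψ0, fun t _ => (hψd t).hasDerivWithinAt, hψanti, ?_, ?_⟩
    · intro t ht
      refine ⟨by rw [← hrmdef]; exact hψlow t, ?_⟩
      have := hψanti Set.self_mem_Ici ht ht
      rw [hψ0] at this; exact this
    · intro φ hφ0 hφd
      exact riccati_unique σ κ lam2 ψ φ
        (fun t _ => (hψd t).hasDerivWithinAt) hφd (by rw [hφ0, hψ0])
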